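/- Assume the Continuum Hypothesis (2^{ℵ₀} = ℵ₁). Then there exists a function φ : [0,1] → [0,1] such that: (i) for every meager set H ⊆ [0,1], the preimage φ⁻¹(H) is countable; and (ii) there is no Borel probability measure ν on [0,1] × [0,1] whose first marginal (pushforward under the first projection) is atomless and whose completion assigns measure 1 to the graph of φ (i.e., such that the complement of {(x, φ(x)) : x ∈ [0,1]} is ν-null). In particular, the graph of φ is null with respect to every Borel probability measure on [0,1] × [0,1] with atomless first marginal. -/

import Mathlib

open MeasureTheory unitInterval Set
open scoped ENNReal NNReal

section Aux

lemma aux_isMeagre_of_isNowhereDense {X : Type*} [TopologicalSpace X] {s : Set X}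
    (h : IsNowhereDense s) : IsMeagre s :=
  isMeagre_iff_countable_union_isNowhereDense.mpr
    ⟨{s}, by simpa, countable_singleton _, by simp⟩

lemma aux_isNowhereDense_singleton (x : unitInterval) :
    IsNowhereDense ({x} : Set unitInterval) := by
  rw [IsClosed.isNowhereDense_iff isClosed_singleton]
  by_contra h
  obtain ⟨y, hy⟩ := nonempty_iff_ne_empty.mpr h
  have hxmem : x ∈ interior ({x} : Set unitInterval) := by
    have : y ∈ ({x} : Set unitInterval) := interior_subset hy
    rwa [mem_singleton_iff.mp this] at hy
  have hopen : IsOpen ({x} : Set unitInterval) := by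
    rw [← interior_eq_iff_isOpen]
    exact subset_antisymm interior_subset (singleton_subset_iff.mpr hxmem)
  have hclopen : IsClopen ({x} : Set unitInterval) := ⟨isClosed_singleton, hopen⟩
  rcases isClopen_iff.mp hclopen with h' | h'
  · exact (singleton_ne_empty x) h'
  · obtain ⟨a, b, hab⟩ := exists_pair_ne unitInterval
    have ha : a ∈ ({x} : Set unitInterval) := h' ▸ mem_univ a
    have hb : b ∈ ({x} : Set unitInterval) := h' ▸ mem_univ b
    exact hab (ha.trans hb.symm)

lemma aux_countable_isMeagre {C : Set unitInterval} (hC : C.Countable) : IsMeagre C :=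
  isMeagre_iff_countable_union_isNowhereDense.mpr
    ⟨(fun x => ({x} : Set unitInterval)) '' C,
     by rintro t ⟨y, -, rfl⟩; exact aux_isNowhereDense_singleton y,
     hC.image _, fun z hz => ⟨{z}, ⟨z, hz, rfl⟩, rfl⟩⟩

/-- Every finite Borel measure on `[0,1]` has a meagre Borel set of full measure. -/
lemma aux_exists_meagre_full (μ : Measure unitInterval) [IsFiniteMeasure μ] :
    ∃ M : Set unitInterval, IsMeagre M ∧ MeasurableSet M ∧ μ Mᶜ = 0 := by
  classical
  set A : Set unitInterval := {t | 0 < μ {a | a = t}} with hA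
  have hAc : A.Countable := Measure.countable_meas_level_set_pos measurable_id
  have hAm : MeasurableSet A := hAc.measurableSet
  set μ' := μ.restrict Aᶜ with hμ'
  have hatom : ∀ x : unitInterval, μ' {x} = 0 := by
    intro x
    rw [hμ', Measure.restrict_apply (measurableSet_singleton x)]
    by_cases hx : x ∈ A
    · have h0 : ({x} : Set unitInterval) ∩ Aᶜ = ∅ := by
        rw [Set.singleton_inter_eq_empty]
        simpa using hx
      rw [h0]; exact measure_empty
    · refine measure_mono_null inter_subset_left ?_
      rw [hA, mem_setOf_eq, not_lt, le_zero_iff, setOf_eq_eq_singleton] at hx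
      exact hx
  obtain ⟨u, hu⟩ := TopologicalSpace.exists_dense_seq unitInterval
  have hδ : ∀ k : ℕ, ∃ δ : ℕ → ℝ≥0, (∀ n, 0 < δ n) ∧
      (∑' n, (δ n : ℝ≥0∞)) < ((k : ℝ≥0∞) + 1)⁻¹ := by
    intro k
    exact ENNReal.exists_pos_sum_of_countable
      (ENNReal.inv_ne_zero.2 (ENNReal.add_ne_top.2 ⟨ENNReal.natCast_ne_top k, ENNReal.one_ne_top⟩)) ℕ
  choose δ hδpos hδsum using hδ
  have hU : ∀ k n : ℕ, ∃ U : Set unitInterval, {u n} ⊆ U ∧ IsOpen U ∧ μ' U < δ k n := by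
    intro k n
    exact Set.exists_isOpen_lt_of_lt _ _ (by rw [hatom]; exact ENNReal.coe_pos.2 (hδpos k n))
  choose U hUmem hUopen hUsmall using hU
  set G : ℕ → Set unitInterval := fun k => ⋃ n, U k n with hG
  have hGopen : ∀ k, IsOpen (G k) := fun k => isOpen_iUnion (hUopen k)
  have hGdense : ∀ k, Dense (G k) := by
    intro k
    refine hu.mono ?_
    rintro - ⟨n, rfl⟩
    exact mem_iUnion.2 ⟨n, hUmem k n rfl⟩
  have hGsmall : ∀ k, μ' (G k) < ((k : ℝ≥0∞) + 1)⁻¹ := by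
    intro k
    refine lt_of_le_of_lt (measure_iUnion_le _) ?_
    exact lt_of_le_of_lt (ENNReal.tsum_le_tsum fun n => (hUsmall k n).le) (hδsum k)
  set R : Set unitInterval := ⋂ k, G k with hR
  have hRm : MeasurableSet R := MeasurableSet.iInter fun k => (hGopen k).measurableSet
  have hRnull : μ' R = 0 := by
    by_contra hne
    obtain ⟨n, hn⟩ := ENNReal.exists_inv_nat_lt hne
    have h1 : μ' R ≤ μ' (G n) := measure_mono (iInter_subset _ n)
    have h2 : ((n : ℝ≥0∞) + 1)⁻¹ ≤ (n : ℝ≥0∞)⁻¹ := by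
      apply ENNReal.inv_le_inv.2
      exact le_self_add
    exact absurd (h1.trans_lt ((hGsmall n).trans_le h2)) (not_lt.2 hn.le)
  refine ⟨Rᶜ ∪ A, ?_, ?_, ?_⟩
  · rw [IsMeagre, compl_union, compl_compl]
    refine Filter.inter_mem ?_ (aux_countable_isMeagre hAc)
    exact countable_iInter_mem.2 fun k => residual_of_dense_open (hGopen k) (hGdense k)
  · exact hRm.compl.union hAm
  · rw [compl_union, compl_compl]
    rw [← Measure.restrict_apply hRm]
    exact hRnull

/-- CH construction of the Sierpiński-type function. -/
lemma aux_exists_phi (hCH : (2 : Cardinal.{0}) ^ Cardinal.aleph0.{0} = Cardinal.aleph.{0} 1) :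
    ∃ φ : unitInterval → unitInterval,
      ∀ H : Set unitInterval, IsMeagre H → (φ ⁻¹' H).Countable := by
  classical
  have hcont : Cardinal.continuum = Cardinal.aleph 1 := by
    rw [← Cardinal.two_power_aleph0, hCH]
  set O : Type := (Cardinal.aleph.{0} 1).ord.ToType with hO
  have hOcard : Cardinal.mk O = Cardinal.aleph 1 := Cardinal.mk_ord_toType _
  have hI : Cardinal.mk unitInterval = Cardinal.aleph 1 := by
    rw [← hcont]
    exact Cardinal.mk_Icc_real zero_lt_one
  obtain ⟨e⟩ : Nonempty (unitInterval ≃ O) := Cardinal.eq.mp (hI.trans hOcard.symm)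
  set D := {U : Set unitInterval // IsOpen U ∧ Dense U} with hD
  have hDne : Nonempty D := ⟨⟨univ, isOpen_univ, dense_univ⟩⟩
  have hDcard : Cardinal.mk (ℕ → D) ≤ Cardinal.aleph 1 := by
    have hB := TopologicalSpace.countable_countableBasis unitInterval
    set B := TopologicalSpace.countableBasis unitInterval with hBdef
    have hinj : Function.Injective
        (fun (V : D) => {b : B | (b : Set unitInterval) ⊆ V.1}) := by
      intro V W h
      apply Subtype.ext
      have hfam : {s : Set unitInterval | s ∈ B ∧ s ⊆ V.1} =
          {s : Set unitInterval | s ∈ B ∧ s ⊆ W.1} := by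
        ext s
        simp only [mem_setOf_eq]
        constructor
        · rintro ⟨hsB, hsub⟩
          exact ⟨hsB, (Set.ext_iff.mp h ⟨s, hsB⟩).mp hsub⟩
        · rintro ⟨hsB, hsub⟩
          exact ⟨hsB, (Set.ext_iff.mp h ⟨s, hsB⟩).mpr hsub⟩
      rw [(TopologicalSpace.isBasis_countableBasis _).open_eq_sUnion' V.2.1,
          (TopologicalSpace.isBasis_countableBasis _).open_eq_sUnion' W.2.1]
      exact congrArg _ hfam
    have h1 : Cardinal.mk D ≤ Cardinal.continuum := by
      have := Cardinal.mk_le_of_injective hinj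
      refine this.trans ?_
      have : Countable B := hB.to_subtype
      calc Cardinal.mk (Set B) = 2 ^ Cardinal.mk B := Cardinal.mk_set
        _ ≤ 2 ^ Cardinal.aleph0 :=
            Cardinal.power_le_power_left (by norm_num) Cardinal.mk_le_aleph0
        _ = Cardinal.continuum := Cardinal.two_power_aleph0
    calc Cardinal.mk (ℕ → D) = Cardinal.mk D ^ Cardinal.aleph0 := by
          rw [← Cardinal.mk_nat]; exact (Cardinal.power_def _ _).symm
      _ ≤ Cardinal.continuum ^ Cardinal.aleph0 := Cardinal.power_le_power_right h1
      _ = Cardinal.continuum := Cardinal.continuum_power_aleph0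
      _ = Cardinal.aleph 1 := hcont
  obtain ⟨f⟩ : Nonempty ((ℕ → D) ↪ O) :=
    Cardinal.le_def _ _ |>.mp (hDcard.trans hOcard.symm.le)
  set g : O → (ℕ → D) := Function.invFun f with hg
  have hgs : Function.Surjective g := Function.invFun_surjective f.injective
  set M : O → Set unitInterval := fun i => ⋃ n, ((g i n : Set unitInterval))ᶜ with hM
  have hMmeagre : ∀ i, IsMeagre (M i) := by
    intro i
    refine isMeagre_iUnion fun n => aux_isMeagre_of_isNowhereDense ?_
    have h := isClosed_isNowhereDense_iff_compl
      (s := ((g i n : Set unitInterval))ᶜ)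
    rw [compl_compl] at h
    exact (h.mpr ⟨(g i n).2.1, (g i n).2.2⟩).2
  have hIio : ∀ i : O, (Iio i).Countable := fun i =>
    (Cardinal.countable_iff_lt_aleph_one _).2 (Cardinal.mk_Iio_ord_toType i)
  have hIic : ∀ i : O, (Iic i).Countable := by
    intro i
    rw [← Iio_union_right]
    exact (hIio i).union (countable_singleton i)
  have key : ∀ x : unitInterval, ∃ y, y ∉ ⋃ j ∈ Iic (e x), M j := by
    intro x
    have hres : (⋃ j ∈ Iic (e x), M j)ᶜ ∈ residual unitInterval := by
      rw [compl_iUnion₂]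
      exact (countable_bInter_mem (hIic (e x))).2 fun j _ => hMmeagre j
    obtain ⟨y, hy⟩ := (dense_of_mem_residual hres).nonempty
    exact ⟨y, hy⟩
  choose φ hφ using key
  refine ⟨φ, fun H hH => ?_⟩
  obtain ⟨S, hSo, hSd, hSc, hSsub⟩ := mem_residual_iff.mp hH
  set S' := insert (univ : Set unitInterval) S with hS'
  obtain ⟨f₀, hf₀⟩ := (hSc.insert _).exists_eq_range ⟨univ, mem_insert _ _⟩
  have hf₀od : ∀ n, IsOpen (f₀ n) ∧ Dense (f₀ n) := by
    intro n
    have hmem : f₀ n ∈ insert (univ : Set unitInterval) S := by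
      rw [hf₀]; exact mem_range_self n
    rcases mem_insert_iff.mp hmem with h | h
    · rw [h]; exact ⟨isOpen_univ, dense_univ⟩
    · exact ⟨hSo _ h, hSd _ h⟩
  obtain ⟨i, hi⟩ := hgs fun n => (⟨f₀ n, hf₀od n⟩ : D)
  have hHM : H ⊆ M i := by
    intro z hz
    have hz' : z ∉ ⋂₀ S := fun hmem => (hSsub hmem) hz
    rw [mem_sInter, not_forall] at hz'
    push_neg at hz'
    obtain ⟨s, hs, hzs⟩ := hz'
    have hs' : s ∈ range f₀ := by
      rw [← hf₀]; exact mem_insert_of_mem _ hs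
    obtain ⟨n, rfl⟩ := hs'
    refine mem_iUnion.2 ⟨n, ?_⟩
    rw [hi]
    exact hzs
  have hsub2 : φ ⁻¹' H ⊆ e ⁻¹' (Iio i) := by
    intro x hx
    rw [mem_preimage] at hx ⊢
    rw [mem_Iio]
    by_contra hlt
    push_neg at hlt
    exact hφ x (mem_biUnion hlt (hHM hx))
  exact ((hIio i).preimage e.injective).mono hsub2

end Aux

theorem stmt_16 (hCH : (2 : Cardinal) ^ Cardinal.aleph0 = Cardinal.aleph 1) :
    ∃ φ : unitInterval → unitInterval,
      (∀ H : Set unitInterval, IsMeagre H → (φ ⁻¹' H).Countable) ∧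
      (¬ ∃ ν : ProbabilityMeasure (unitInterval × unitInterval),
          (∀ a : unitInterval,
            ((ν : Measure (unitInterval × unitInterval)).map Prod.fst) {a} = 0) ∧
          (ν : Measure (unitInterval × unitInterval))
            {p : unitInterval × unitInterval | p.2 ≠ φ p.1} = 0) ∧
      (∀ ν : ProbabilityMeasure (unitInterval × unitInterval),
        (∀ a : unitInterval,
          ((ν : Measure (unitInterval × unitInterval)).map Prod.fst) {a} = 0) →
        (ν : Measure (unitInterval × unitInterval))
          {p : unitInterval × unitInterval | p.2 = φ p.1} = 0) := by
  have hCH0 : (2 : Cardinal.{0}) ^ Cardinal.aleph0.{0} = Cardinal.aleph.{0} 1 := by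
    apply Cardinal.lift_injective
    rw [Cardinal.lift_two_power, Cardinal.lift_aleph0, Cardinal.lift_aleph, Ordinal.lift_one, hCH]
  obtain ⟨φ, hφ⟩ := aux_exists_phi hCH0
  have hgraph : ∀ ν : ProbabilityMeasure (unitInterval × unitInterval),
      (∀ a : unitInterval,
        ((ν : Measure (unitInterval × unitInterval)).map Prod.fst) {a} = 0) →
      (ν : Measure (unitInterval × unitInterval))
        {p : unitInterval × unitInterval | p.2 = φ p.1} = 0 := by
    intro ν hν
    set νm : Measure (unitInterval × unitInterval) := (ν : Measure (unitInterval × unitInterval)) with hνm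
    have : IsProbabilityMeasure (νm.map Prod.snd) :=
      Measure.isProbabilityMeasure_map measurable_snd.aemeasurable
    obtain ⟨M, hMmeagre, hMmeas, hMfull⟩ := aux_exists_meagre_full (νm.map Prod.snd)
    set C := φ ⁻¹' M with hC
    have hCc : C.Countable := hφ M hMmeagre
    have hCm : MeasurableSet C := hCc.measurableSet
    have hsub : {p : unitInterval × unitInterval | p.2 = φ p.1} ⊆
        (Prod.snd ⁻¹' Mᶜ) ∪ (Prod.fst ⁻¹' C) := by
      rintro ⟨a, b⟩ hp
      simp only [mem_setOf_eq] at hp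
      by_cases hb : b ∈ M
      · right
        rw [mem_preimage, hC, mem_preimage]
        rwa [hp] at hb
      · left
        exact hb
    have h1 : νm (Prod.snd ⁻¹' Mᶜ) = 0 := by
      rw [← Measure.map_apply measurable_snd hMmeas.compl]
      exact hMfull
    have h2 : νm (Prod.fst ⁻¹' C) = 0 := by
      rw [← Measure.map_apply measurable_fst hCm]
      have : C = ⋃ x ∈ C, ({x} : Set unitInterval) := (biUnion_of_singleton C).symm
      rw [this]
      exact (measure_biUnion_null_iff hCc).2 fun x _ => hν x
    refine le_antisymm ?_ zero_le
    calc νm {p : unitInterval × unitInterval | p.2 = φ p.1}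
        ≤ νm ((Prod.snd ⁻¹' Mᶜ) ∪ (Prod.fst ⁻¹' C)) := measure_mono hsub
      _ ≤ νm (Prod.snd ⁻¹' Mᶜ) + νm (Prod.fst ⁻¹' C) := measure_union_le _ _
      _ = 0 := by rw [h1, h2, add_zero]
  refine ⟨φ, hφ, ?_, hgraph⟩
  rintro ⟨ν, hν1, hν2⟩
  have h3 := hgraph ν hν1
  have huniv : (ν : Measure (unitInterval × unitInterval)) univ = 0 := by
    have hsub : (univ : Set (unitInterval × unitInterval)) ⊆
        {p : unitInterval × unitInterval | p.2 = φ p.1} ∪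
        {p : unitInterval × unitInterval | p.2 ≠ φ p.1} := by
      intro p _
      by_cases h : p.2 = φ p.1
      · exact Or.inl h
      · exact Or.inr h
    refine le_antisymm ?_ zero_le
    calc (ν : Measure (unitInterval × unitInterval)) univ
        ≤ (ν : Measure (unitInterval × unitInterval))
            ({p : unitInterval × unitInterval | p.2 = φ p.1} ∪
             {p : unitInterval × unitInterval | p.2 ≠ φ p.1}) := measure_mono hsub
      _ ≤ _ + _ := measure_union_le _ _
      _ = 0 := by rw [h3, hν2, add_zero]
    
  rw [measure_univ] at huniv
  exact one_ne_zero huniv
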